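/- Let W be a subset of the set V of pure octonions of the real octonion algebra 𝕆 such that W ≠ {0}, W is closed under multiplication by real scalars, and φ(W) ⊆ W for every ℝ-algebra automorphism φ of 𝕆. Then W = V. -/

import Mathlib

noncomputable section

/-- The real octonions: the Cayley–Dickson double of the quaternions. -/
@[ext]
structure Octo : Type where
  a : Quaternion ℝ
  b : Quaternion ℝ

namespace Octo

instance : Zero Octo := ⟨⟨0, 0⟩⟩
instance : One Octo := ⟨⟨1, 0⟩⟩
instance : Add Octo := ⟨fun u v => ⟨u.a + v.a, u.b + v.b⟩⟩
instance : Neg Octo := ⟨fun u => ⟨-u.a, -u.b⟩⟩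
instance : SMul ℝ Octo := ⟨fun r u => ⟨r • u.a, r • u.b⟩⟩
instance : Mul Octo :=
  ⟨fun u v => ⟨u.a * v.a - star v.b * u.b, v.b * u.a + u.b * star v.a⟩⟩
instance : Star Octo := ⟨fun u => ⟨star u.a, -u.b⟩⟩

@[simp] lemma zero_a : (0 : Octo).a = 0 := rfl
@[simp] lemma zero_b : (0 : Octo).b = 0 := rfl
@[simp] lemma one_a : (1 : Octo).a = 1 := rfl
@[simp] lemma one_b : (1 : Octo).b = 0 := rfl
@[simp] lemma add_a (u v : Octo) : (u + v).a = u.a + v.a := rfl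
@[simp] lemma add_b (u v : Octo) : (u + v).b = u.b + v.b := rfl
@[simp] lemma neg_a (u : Octo) : (-u).a = -u.a := rfl
@[simp] lemma neg_b (u : Octo) : (-u).b = -u.b := rfl
@[simp] lemma smul_a (r : ℝ) (u : Octo) : (r • u).a = r • u.a := rfl
@[simp] lemma smul_b (r : ℝ) (u : Octo) : (r • u).b = r • u.b := rfl
@[simp] lemma mul_a (u v : Octo) : (u * v).a = u.a * v.a - star v.b * u.b := rfl
@[simp] lemma mul_b (u v : Octo) : (u * v).b = v.b * u.a + u.b * star v.a := rfl
@[simp] lemma star_a (u : Octo) : (star u).a = star u.a := rfl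
@[simp] lemma star_b (u : Octo) : (star u).b = -u.b := rfl

instance addCommGroup : AddCommGroup Octo where
  add_assoc u v w := by refine Octo.ext ?_ ?_ <;> simp only [add_a, add_b] <;> apply add_assoc
  zero_add u := by refine Octo.ext ?_ ?_ <;> simp only [add_a, add_b, zero_a, zero_b] <;> apply zero_add
  add_zero u := by refine Octo.ext ?_ ?_ <;> simp only [add_a, add_b, zero_a, zero_b] <;> apply add_zero
  nsmul := nsmulRec
  zsmul := zsmulRec
  neg_add_cancel u := by
    refine Octo.ext ?_ ?_ <;> simp only [add_a, add_b, neg_a, neg_b, zero_a, zero_b] <;> apply neg_add_cancel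
  add_comm u v := by refine Octo.ext ?_ ?_ <;> simp only [add_a, add_b] <;> apply add_comm

lemma left_distrib' (u v w : Octo) : u * (v + w) = u * v + u * w := by
  refine Octo.ext ?_ ?_ <;> simp only [mul_a, mul_b, add_a, add_b, star_add, mul_add, add_mul] <;> abel

lemma right_distrib' (u v w : Octo) : (u + v) * w = u * w + v * w := by
  refine Octo.ext ?_ ?_ <;> simp only [mul_a, mul_b, add_a, add_b, star_add, mul_add, add_mul] <;> abel

lemma zero_mul' (u : Octo) : 0 * u = 0 := by
  refine Octo.ext ?_ ?_ <;> simp only [mul_a, mul_b, zero_a, zero_b, mul_zero, zero_mul, sub_zero,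
    add_zero, zero_add, zero_sub, neg_zero]

lemma mul_zero' (u : Octo) : u * 0 = 0 := by
  refine Octo.ext ?_ ?_ <;> simp only [mul_a, mul_b, zero_a, zero_b, mul_zero, zero_mul, sub_zero,
    add_zero, zero_add, zero_sub, neg_zero, star_zero]

instance : NonUnitalNonAssocRing Octo :=
  { Octo.addCommGroup, (inferInstance : Mul Octo) with
    left_distrib := left_distrib'
    right_distrib := right_distrib'
    zero_mul := zero_mul'
    mul_zero := mul_zero' }

instance module : Module ℝ Octo where
  one_smul u := by refine Octo.ext ?_ ?_ <;> simp only [smul_a, smul_b] <;> apply one_smul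
  mul_smul r s u := by refine Octo.ext ?_ ?_ <;> simp only [smul_a, smul_b] <;> apply mul_smul
  smul_zero r := by refine Octo.ext ?_ ?_ <;> simp only [smul_a, smul_b, zero_a, zero_b] <;> apply smul_zero
  smul_add r u v := by refine Octo.ext ?_ ?_ <;> simp only [smul_a, smul_b, add_a, add_b] <;> apply smul_add
  add_smul r s u := by refine Octo.ext ?_ ?_ <;> simp only [smul_a, smul_b, add_a, add_b] <;> apply add_smul
  zero_smul u := by refine Octo.ext ?_ ?_ <;> simp only [smul_a, smul_b, zero_a, zero_b] <;> apply zero_smul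

instance : IsScalarTower ℝ Octo Octo :=
  ⟨fun r u v => by
    show (r • u) * v = r • (u * v)
    refine Octo.ext ?_ ?_ <;>
      simp only [mul_a, mul_b, smul_a, smul_b, smul_sub, smul_add, mul_smul_comm,
        smul_mul_assoc]⟩

instance : SMulCommClass ℝ Octo Octo :=
  ⟨fun r u v => by
    show r • (u * v) = u * (r • v)
    refine Octo.ext ?_ ?_ <;>
      simp only [mul_a, mul_b, smul_a, smul_b, smul_sub, smul_add, mul_smul_comm,
        smul_mul_assoc, Quaternion.star_smul]⟩

instance : StarRing Octo where
  star_involutive u := by refine Octo.ext ?_ ?_ <;> simp only [star_a, star_b, star_star, neg_neg]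
  star_mul u v := by
    refine Octo.ext ?_ ?_ <;>
      simp only [star_a, star_b, mul_a, mul_b, star_sub, star_add, star_mul, star_star, star_neg,
        mul_neg, neg_mul, neg_add_rev, neg_neg, neg_sub] <;> abel
  star_add u v := by refine Octo.ext ?_ ?_ <;> simp only [star_a, star_b, add_a, add_b, star_add, neg_add_rev] <;> abel

instance : StarModule ℝ Octo :=
  ⟨fun r u => by
    refine Octo.ext ?_ ?_ <;> simp only [star_a, star_b, smul_a, smul_b, Quaternion.star_smul,
      star_trivial, smul_neg]⟩

/-- The set of pure octonions (trace zero). -/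
def V : Set Octo := {x : Octo | x + star x = 0}

/-- The set of scalar octonions `ℝ·1`. -/
def scalars : Set Octo := Set.range fun r : ℝ => r • (1 : Octo)

/-- `φ` is an `ℝ`-algebra automorphism of the octonions. -/
def IsAut (φ : Octo ≃ₗ[ℝ] Octo) : Prop :=
  φ 1 = 1 ∧ ∀ x y : Octo, φ (x * y) = φ x * φ y

end Octo

/-- Number of occurrences of the variable `i` in a nonassociative word. -/
def FreeMagma.degCount {X : Type*} [DecidableEq X] : FreeMagma X → X → ℕ
  | .of x, i => if x = i then 1 else 0
  | .mul w₁ w₂, i => w₁.degCount i + w₂.degCount i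

/-- A nonassociative polynomial is multilinear if every variable occurs exactly once
in each of its monomials. -/
def IsMultilinear {R : Type*} [Semiring R] {n : ℕ}
    (p : FreeNonUnitalNonAssocAlgebra R (Fin n)) : Prop :=
  ∀ w ∈ p.coeff.support, ∀ i : Fin n, w.degCount i = 1

/-- Evaluation of a nonassociative polynomial on the octonions. -/
def Octo.eval {n : ℕ} (p : FreeNonUnitalNonAssocAlgebra ℝ (Fin n)) (v : Fin n → Octo) : Octo :=
  FreeNonUnitalNonAssocAlgebra.lift ℝ v p

namespace OctoAux

open Octo

abbrev Q := Quaternion ℝ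

lemma key_mul (a X u v Y b : Q) (h : u * v = 1) :
    (a * X * u) * (v * Y * b) = a * (X * Y) * b := by
  have h1 : (a * X * u) * (v * Y * b) = a * (X * ((u * v) * Y)) * b := by noncomm_ring
  rw [h1, h, one_mul, ← mul_assoc]

lemma star_triple (p A r : Q) : star (p * A * star r) = r * star A * star p := by
  simp only [star_mul, star_star, mul_assoc]

lemma unit_mul_star {q : Q} (h : Quaternion.normSq q = 1) : q * star q = 1 := by
  rw [Quaternion.self_mul_star, h, Quaternion.coe_one]

lemma unit_star_mul {q : Q} (h : Quaternion.normSq q = 1) : star q * q = 1 := by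
  rw [Quaternion.star_mul_self, h, Quaternion.coe_one]

/-- the quaternion `i`. -/
def qI : Q := ⟨0, 1, 0, 0⟩

@[simp] lemma qI_re : qI.re = 0 := rfl
@[simp] lemma qI_imI : qI.imI = 1 := rfl
@[simp] lemma qI_imJ : qI.imJ = 0 := rfl
@[simp] lemma qI_imK : qI.imK = 0 := rfl

/-- canonical pure unit octonion. -/
def e1 : Octo := ⟨qI, 0⟩

@[simp] lemma e1_a : e1.a = qI := rfl
@[simp] lemma e1_b : e1.b = 0 := rfl

lemma mem_V_iff (x : Octo) : x ∈ Octo.V ↔ x.a.re = 0 := by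
  constructor
  · intro h
    have h1 : (x + star x).a.re = (0 : Octo).a.re := by rw [show x + star x = 0 from h]
    simp only [add_a, star_a, Quaternion.re_add, Quaternion.re_star, zero_a,
      Quaternion.re_zero] at h1
    linarith
  · intro h
    show x + star x = 0
    refine Octo.ext ?_ ?_
    · show x.a + star x.a = (0 : Octo).a
      ext <;> simp [h, Quaternion.re_zero, Quaternion.imI_zero, Quaternion.imJ_zero, Quaternion.imK_zero]
    · show x.b + -x.b = (0 : Octo).b
      simp

/-- the quaternionic-pair automorphisms of the octonions. -/
def Phi (q r : Q) (hq : Quaternion.normSq q = 1) (hr : Quaternion.normSq r = 1) :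
    Octo ≃ₗ[ℝ] Octo where
  toFun x := ⟨q * x.a * star q, r * x.b * star q⟩
  invFun x := ⟨star q * x.a * q, star r * x.b * q⟩
  map_add' x y := by
    refine Octo.ext ?_ ?_ <;> simp only [add_a, add_b] <;> noncomm_ring
  map_smul' c x := by
    refine Octo.ext ?_ ?_ <;>
      simp only [smul_a, smul_b, RingHom.id_apply, smul_mul_assoc, mul_smul_comm]
  left_inv x := by
    have h1 := unit_star_mul hq
    have h2 := unit_star_mul hr
    refine Octo.ext ?_ ?_
    · show star q * (q * x.a * star q) * q = x.a
      have e : star q * (q * x.a * star q) * q = (star q * q) * x.a * (star q * q) := by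
        noncomm_ring
      rw [e, h1, one_mul, mul_one]
    · show star r * (r * x.b * star q) * q = x.b
      have e : star r * (r * x.b * star q) * q = (star r * r) * x.b * (star q * q) := by
        noncomm_ring
      rw [e, h1, h2, one_mul, mul_one]
  right_inv x := by
    have h1 := unit_mul_star hq
    have h2 := unit_mul_star hr
    refine Octo.ext ?_ ?_
    · show q * (star q * x.a * q) * star q = x.a
      have e : q * (star q * x.a * q) * star q = (q * star q) * x.a * (q * star q) := by
        noncomm_ring
      rw [e, h1, one_mul, mul_one]
    · show r * (star r * x.b * q) * star q = x.b
      have e : r * (star r * x.b * q) * star q = (r * star r) * x.b * (q * star q) := by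
        noncomm_ring
      rw [e, h1, h2, one_mul, mul_one]

@[simp] lemma Phi_apply (q r : Q) (hq : Quaternion.normSq q = 1) (hr : Quaternion.normSq r = 1)
    (x : Octo) : Phi q r hq hr x = ⟨q * x.a * star q, r * x.b * star q⟩ := rfl

lemma Phi_isAut (q r : Q) (hq : Quaternion.normSq q = 1) (hr : Quaternion.normSq r = 1) :
    Octo.IsAut (Phi q r hq hr) := by
  have hsq := unit_star_mul hq
  have hsr := unit_star_mul hr
  constructor
  · refine Octo.ext ?_ ?_
    · show q * (1 : Octo).a * star q = (1 : Octo).a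
      simp only [one_a, mul_one, unit_mul_star hq]
    · show r * (1 : Octo).b * star q = (1 : Octo).b
      simp only [one_b, mul_zero, zero_mul]
  · intro x y
    refine Octo.ext ?_ ?_
    · show q * (x * y).a * star q =
        (q * x.a * star q) * (q * y.a * star q) -
          star (r * y.b * star q) * (r * x.b * star q)
      rw [mul_a, key_mul q x.a (star q) q y.a (star q) hsq, star_triple r y.b q,
        key_mul q (star y.b) (star r) r x.b (star q) hsr]
      noncomm_ring
    · show r * (x * y).b * star q =
        (r * y.b * star q) * (q * x.a * star q) +
          (r * x.b * star q) * star (q * y.a * star q)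
      rw [mul_b, key_mul r y.b (star q) q x.a (star q) hsq, star_triple q y.a q,
        key_mul r x.b (star q) q (star y.a) (star q) hsq]
      noncomm_ring

end OctoAux
namespace OctoAux

open Octo

lemma q_re_sub (p q : Q) : (p - q).re = p.re - q.re := Quaternion.re_sub p q
lemma q_re_zero : (0 : Q).re = 0 := rfl
lemma q_imI_sub (p q : Q) : (p - q).imI = p.imI - q.imI := Quaternion.imI_sub p q
lemma q_imI_zero : (0 : Q).imI = 0 := rfl
lemma q_imJ_sub (p q : Q) : (p - q).imJ = p.imJ - q.imJ := Quaternion.imJ_sub p q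
lemma q_imJ_zero : (0 : Q).imJ = 0 := rfl
lemma q_imK_sub (p q : Q) : (p - q).imK = p.imK - q.imK := Quaternion.imK_sub p q
lemma q_imK_zero : (0 : Q).imK = 0 := rfl
abbrev QA := QuaternionAlgebra ℝ (-1) 0 (-1)
lemma q_re_add (p q : QA) : (@HAdd.hAdd Q Q Q _ p q).re = p.re + q.re := Quaternion.re_add p q
lemma q_re_smul (t : ℝ) (p : QA) : (@HSMul.hSMul ℝ Q Q _ t p).re = t • p.re :=
  Quaternion.re_smul p t
lemma q_imI_add (p q : QA) : (@HAdd.hAdd Q Q Q _ p q).imI = p.imI + q.imI := Quaternion.imI_add p q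
lemma q_imI_smul (t : ℝ) (p : QA) : (@HSMul.hSMul ℝ Q Q _ t p).imI = t • p.imI :=
  Quaternion.imI_smul p t
lemma q_imJ_add (p q : QA) : (@HAdd.hAdd Q Q Q _ p q).imJ = p.imJ + q.imJ := Quaternion.imJ_add p q
lemma q_imJ_smul (t : ℝ) (p : QA) : (@HSMul.hSMul ℝ Q Q _ t p).imJ = t • p.imJ :=
  Quaternion.imJ_smul p t
lemma q_imK_add (p q : QA) : (@HAdd.hAdd Q Q Q _ p q).imK = p.imK + q.imK := Quaternion.imK_add p q
lemma q_imK_smul (t : ℝ) (p : QA) : (@HSMul.hSMul ℝ Q Q _ t p).imK = t • p.imK :=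
  Quaternion.imK_smul p t
lemma q_re_mul (p : QA) (q : QA) : (@HMul.hMul Q Q Q _ p q).re =
    p.re * q.re - p.imI * q.imI - p.imJ * q.imJ - p.imK * q.imK := Quaternion.re_mul p q
lemma q_re_mul_l (p : Q) (q : QA) : (@HMul.hMul Q Q Q _ p q).re =
    p.re * q.re - p.imI * q.imI - p.imJ * q.imJ - p.imK * q.imK := Quaternion.re_mul p q
lemma q_re_mul_r (p : QA) (q : Q) : (@HMul.hMul Q Q Q _ p q).re =
    p.re * q.re - p.imI * q.imI - p.imJ * q.imJ - p.imK * q.imK := Quaternion.re_mul p q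
lemma q_imI_mul (p : QA) (q : QA) : (@HMul.hMul Q Q Q _ p q).imI =
    p.re * q.imI + p.imI * q.re + p.imJ * q.imK - p.imK * q.imJ := Quaternion.imI_mul p q
lemma q_imI_mul_l (p : Q) (q : QA) : (@HMul.hMul Q Q Q _ p q).imI =
    p.re * q.imI + p.imI * q.re + p.imJ * q.imK - p.imK * q.imJ := Quaternion.imI_mul p q
lemma q_imI_mul_r (p : QA) (q : Q) : (@HMul.hMul Q Q Q _ p q).imI =
    p.re * q.imI + p.imI * q.re + p.imJ * q.imK - p.imK * q.imJ := Quaternion.imI_mul p q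
lemma q_imJ_mul (p : QA) (q : QA) : (@HMul.hMul Q Q Q _ p q).imJ =
    p.re * q.imJ - p.imI * q.imK + p.imJ * q.re + p.imK * q.imI := Quaternion.imJ_mul p q
lemma q_imJ_mul_l (p : Q) (q : QA) : (@HMul.hMul Q Q Q _ p q).imJ =
    p.re * q.imJ - p.imI * q.imK + p.imJ * q.re + p.imK * q.imI := Quaternion.imJ_mul p q
lemma q_imJ_mul_r (p : QA) (q : Q) : (@HMul.hMul Q Q Q _ p q).imJ =
    p.re * q.imJ - p.imI * q.imK + p.imJ * q.re + p.imK * q.imI := Quaternion.imJ_mul p q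
lemma q_imK_mul (p : QA) (q : QA) : (@HMul.hMul Q Q Q _ p q).imK =
    p.re * q.imK + p.imI * q.imJ - p.imJ * q.imI + p.imK * q.re := Quaternion.imK_mul p q
lemma q_imK_mul_l (p : Q) (q : QA) : (@HMul.hMul Q Q Q _ p q).imK =
    p.re * q.imK + p.imI * q.imJ - p.imJ * q.imI + p.imK * q.re := Quaternion.imK_mul p q
lemma q_imK_mul_r (p : QA) (q : Q) : (@HMul.hMul Q Q Q _ p q).imK =
    p.re * q.imK + p.imI * q.imJ - p.imJ * q.imI + p.imK * q.re := Quaternion.imK_mul p q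
lemma q_re_star (p : QA) : (@star Q _ p).re = p.re := Quaternion.re_star p
lemma q_imI_star (p : QA) : (@star Q _ p).imI = -p.imI := Quaternion.imI_star p
lemma q_imJ_star (p : QA) : (@star Q _ p).imJ = -p.imJ := Quaternion.imJ_star p
lemma q_imK_star (p : QA) : (@star Q _ p).imK = -p.imK := Quaternion.imK_star p
lemma q_re_one : (1 : Q).re = 1 := rfl
lemma q_imI_one : (1 : Q).imI = 0 := rfl
lemma q_imJ_one : (1 : Q).imJ = 0 := rfl
lemma q_imK_one : (1 : Q).imK = 0 := rfl

/-- rotation in the (i, ℓ)- and (k, jℓ)-planes. -/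
def rho (c s : ℝ) (h : c ^ 2 + s ^ 2 = 1) : Octo ≃ₗ[ℝ] Octo where
  toFun x := ⟨⟨x.a.re, c * x.a.imI - s * x.b.re, x.a.imJ, c * x.a.imK + s * x.b.imJ⟩,
              ⟨s * x.a.imI + c * x.b.re, x.b.imI, c * x.b.imJ - s * x.a.imK, x.b.imK⟩⟩
  invFun x := ⟨⟨x.a.re, c * x.a.imI + s * x.b.re, x.a.imJ, c * x.a.imK - s * x.b.imJ⟩,
              ⟨c * x.b.re - s * x.a.imI, x.b.imI, c * x.b.imJ + s * x.a.imK, x.b.imK⟩⟩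
  map_add' x y := by
    refine Octo.ext (Quaternion.ext _ _ ?_ ?_ ?_ ?_) (Quaternion.ext _ _ ?_ ?_ ?_ ?_) <;>
      simp only [add_a, add_b, Quaternion.re_add, Quaternion.imI_add, Quaternion.imJ_add,
        Quaternion.imK_add, q_re_add, q_imI_add, q_imJ_add, q_imK_add] <;> ring
  map_smul' t x := by
    refine Octo.ext (Quaternion.ext _ _ ?_ ?_ ?_ ?_) (Quaternion.ext _ _ ?_ ?_ ?_ ?_) <;>
      simp only [smul_a, smul_b, RingHom.id_apply, Quaternion.re_smul, Quaternion.imI_smul,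
        Quaternion.imJ_smul, Quaternion.imK_smul, smul_eq_mul, q_re_smul, q_imI_smul,
        q_imJ_smul, q_imK_smul] <;> ring
  left_inv x := by
    refine Octo.ext (Quaternion.ext _ _ ?_ ?_ ?_ ?_) (Quaternion.ext _ _ ?_ ?_ ?_ ?_) <;>
      dsimp only
    · linear_combination x.a.imI * h
    · linear_combination x.a.imK * h
    · linear_combination x.b.re * h
    · linear_combination x.b.imJ * h
  right_inv x := by
    refine Octo.ext (Quaternion.ext _ _ ?_ ?_ ?_ ?_) (Quaternion.ext _ _ ?_ ?_ ?_ ?_) <;>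
      dsimp only
    · linear_combination x.a.imI * h
    · linear_combination x.a.imK * h
    · linear_combination x.b.re * h
    · linear_combination x.b.imJ * h

@[simp] lemma rho_apply (c s : ℝ) (h : c ^ 2 + s ^ 2 = 1) (x : Octo) :
    rho c s h x = ⟨⟨x.a.re, c * x.a.imI - s * x.b.re, x.a.imJ, c * x.a.imK + s * x.b.imJ⟩,
              ⟨s * x.a.imI + c * x.b.re, x.b.imI, c * x.b.imJ - s * x.a.imK, x.b.imK⟩⟩ := rfl

lemma rho_isAut (c s : ℝ) (h : c ^ 2 + s ^ 2 = 1) : Octo.IsAut (rho c s h) := by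
  constructor
  · refine Octo.ext (Quaternion.ext _ _ ?_ ?_ ?_ ?_) (Quaternion.ext _ _ ?_ ?_ ?_ ?_) <;>
      simp [rho_apply, Quaternion.re_one, Quaternion.imI_one, Quaternion.imJ_one, Quaternion.imK_one,
        Quaternion.re_zero, Quaternion.imI_zero, Quaternion.imJ_zero, Quaternion.imK_zero, q_re_one,
        q_imI_one, q_imJ_one, q_imK_one, q_re_zero, q_imI_zero, q_imJ_zero, q_imK_zero]
  · intro x y
    refine Octo.ext (Quaternion.ext _ _ ?_ ?_ ?_ ?_) (Quaternion.ext _ _ ?_ ?_ ?_ ?_) <;>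
      simp only [rho_apply, mul_a, mul_b, Quaternion.re_mul, Quaternion.imI_mul,
        Quaternion.imJ_mul, Quaternion.imK_mul, Quaternion.re_sub, Quaternion.imI_sub,
        Quaternion.imJ_sub, Quaternion.imK_sub, Quaternion.re_add, Quaternion.imI_add,
        Quaternion.imJ_add, Quaternion.imK_add, Quaternion.re_star, Quaternion.imI_star,
        Quaternion.imJ_star, Quaternion.imK_star, q_re_mul, q_imI_mul, q_imJ_mul,
        q_imK_mul, q_re_mul_l, q_imI_mul_l, q_imJ_mul_l, q_imK_mul_l, q_re_mul_r, q_imI_mul_r,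
        q_imJ_mul_r, q_imK_mul_r, q_re_sub, q_imI_sub, q_imJ_sub, q_imK_sub, q_re_add, q_imI_add, q_imJ_add,
        q_imK_add, q_re_star, q_imI_star, q_imJ_star, q_imK_star]
    · linear_combination (x.b.imJ * y.b.imJ + x.b.re * y.b.re + x.a.imK * y.a.imK +
        x.a.imI * y.a.imI) * h
    · ring
    · linear_combination (x.b.imJ * y.b.re - x.b.re * y.b.imJ - x.a.imK * y.a.imI +
        x.a.imI * y.a.imK) * h
    · ring
    · ring
    · linear_combination (x.b.imJ * y.a.imK + x.b.re * y.a.imI - x.a.imK * y.b.imJ -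
        x.a.imI * y.b.re) * h
    · ring
    · linear_combination (-(x.b.imJ * y.a.imI) + x.b.re * y.a.imK - x.a.imK * y.b.re +
        x.a.imI * y.b.imJ) * h

lemma rho_special (c s : ℝ) (h : c ^ 2 + s ^ 2 = 1) (α β : ℝ) :
    rho c s h ⟨α • qI, ((β : ℝ) : Quaternion ℝ)⟩ =
      ⟨(c * α - s * β) • qI, ((s * α + c * β : ℝ) : Quaternion ℝ)⟩ := by
  refine Octo.ext (Quaternion.ext _ _ ?_ ?_ ?_ ?_) (Quaternion.ext _ _ ?_ ?_ ?_ ?_) <;>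
    simp [rho_apply, Quaternion.re_smul, Quaternion.imI_smul, Quaternion.imJ_smul,
      Quaternion.imK_smul]

end OctoAux
namespace OctoAux

open Octo

lemma conj_inv {q A B : Q} (hq : Quaternion.normSq q = 1) (h : q * A * star q = B) :
    star q * B * q = A := by
  have h1 := unit_star_mul hq
  rw [← h]
  have e : star q * (q * A * star q) * q = (star q * q) * A * (star q * q) := by noncomm_ring
  rw [e, h1, one_mul, mul_one]

lemma exists_conj_to_i (u : Q) (hre : u.re = 0) (hn : Quaternion.normSq u = 1) :
    ∃ q : Q, Quaternion.normSq q = 1 ∧ q * u * star q = qI := by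
  have hn' : u.imI ^ 2 + u.imJ ^ 2 + u.imK ^ 2 = 1 := by
    rw [Quaternion.normSq_def', hre] at hn; linarith
  by_cases hx : u.imI = -1
  · have hj : u.imJ = 0 := by nlinarith [sq_nonneg u.imJ, sq_nonneg u.imK]
    have hk : u.imK = 0 := by nlinarith [sq_nonneg u.imJ, sq_nonneg u.imK]
    refine ⟨⟨0, 0, 1, 0⟩, ?_, ?_⟩
    · rw [Quaternion.normSq_def' (a := (⟨0, 0, 1, 0⟩ : QA))]; norm_num
    · refine Quaternion.ext _ _ ?_ ?_ ?_ ?_ <;>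
        simp [Quaternion.re_mul, Quaternion.imI_mul, Quaternion.imJ_mul, Quaternion.imK_mul,
          Quaternion.re_star, Quaternion.imI_star, Quaternion.imJ_star, Quaternion.imK_star,
          hre, hx, hj, hk, qI, q_re_mul_r, q_imI_mul_r, q_imJ_mul_r, q_imK_mul_r, q_re_star, q_imI_star,
            q_imJ_star, q_imK_star]
  · have hxle : -1 ≤ u.imI := by nlinarith [sq_nonneg u.imJ, sq_nonneg u.imK, sq_nonneg (u.imI + 1)]
    have hxge : -1 < u.imI := hxle.lt_of_ne fun h => hx h.symm
    set n : ℝ := Real.sqrt (2 + 2 * u.imI) with hndef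
    have hn2 : n ^ 2 = 2 + 2 * u.imI := Real.sq_sqrt (by linarith)
    have hnpos : 0 < n := Real.sqrt_pos.mpr (by linarith)
    set q0 : Q := ⟨1 + u.imI, 0, u.imK, -u.imJ⟩ with hq0def
    refine ⟨n⁻¹ • q0, ?_, ?_⟩
    · rw [Quaternion.normSq_smul, Quaternion.normSq_def']
      have e : q0.re ^ 2 + q0.imI ^ 2 + q0.imJ ^ 2 + q0.imK ^ 2 = n ^ 2 := by
        rw [hn2]; show (1 + u.imI) ^ 2 + 0 ^ 2 + u.imK ^ 2 + (-u.imJ) ^ 2 = 2 + 2 * u.imI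
        linear_combination hn'
      rw [e]
      field_simp
    · have expand : (n⁻¹ • q0) * u * star (n⁻¹ • q0) = (n⁻¹ * n⁻¹) • (q0 * u * star q0) := by
        rw [Quaternion.star_smul, smul_mul_assoc, smul_mul_assoc, mul_smul_comm, smul_smul]
      have main : q0 * u * star q0 = (2 + 2 * u.imI) • qI := by
        refine Quaternion.ext _ _ ?_ ?_ ?_ ?_ <;>
          simp only [hq0def, Quaternion.re_mul, Quaternion.imI_mul, Quaternion.imJ_mul,
            Quaternion.imK_mul, Quaternion.re_star, Quaternion.imI_star, Quaternion.imJ_star,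
            Quaternion.imK_star, Quaternion.re_smul, Quaternion.imI_smul, Quaternion.imJ_smul,
            Quaternion.imK_smul, qI_re, qI_imI, qI_imJ, qI_imK, smul_eq_mul, hre, q_re_mul_r, q_imI_mul_r, q_imJ_mul_r, q_imK_mul_r, q_re_star, q_imI_star,
            q_imJ_star, q_imK_star]
        · ring
        · linear_combination (2 + u.imI) * hn'
        · linear_combination (-u.imJ) * hn'
        · linear_combination (-u.imK) * hn'
      rw [expand, main, smul_smul]
      have e : n⁻¹ * n⁻¹ * (2 + 2 * u.imI) = 1 := by
        rw [← hn2]; field_simp [hnpos.ne']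
      rw [e, one_smul]

lemma exists_conj_diag (a : Q) (hre : a.re = 0) :
    ∃ q : Q, Quaternion.normSq q = 1 ∧
      q * a * star q = Real.sqrt (Quaternion.normSq a) • qI := by
  rcases eq_or_ne a 0 with h0 | h0
  · refine ⟨1, by simp [map_one], ?_⟩
    simp [h0]
  · set α : ℝ := Real.sqrt (Quaternion.normSq a) with hαdef
    have hα2 : α ^ 2 = Quaternion.normSq a := Real.sq_sqrt (Quaternion.normSq_nonneg)
    have hαpos : 0 < α := Real.sqrt_pos.mpr (by
      rcases (Quaternion.normSq_nonneg (a := a)).lt_or_eq with h | h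
      · exact h
      · exact absurd (Quaternion.normSq_eq_zero.mp h.symm) h0)
    set u : Q := α⁻¹ • a with hudef
    have hure : u.re = 0 := by rw [hudef, Quaternion.re_smul, hre, smul_zero]
    have hun : Quaternion.normSq u = 1 := by
      rw [hudef, Quaternion.normSq_smul, ← hα2]
      field_simp
    obtain ⟨q, hq, hqi⟩ := exists_conj_to_i u hure hun
    refine ⟨q, hq, ?_⟩
    have ha : a = α • u := by
      rw [hudef, smul_smul, mul_inv_cancel₀ hαpos.ne', one_smul]
    rw [ha, mul_smul_comm, smul_mul_assoc, hqi]

end OctoAux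
namespace OctoAux

open Octo

@[simp] lemma Phi_symm_apply (q r : Q) (hq : Quaternion.normSq q = 1)
    (hr : Quaternion.normSq r = 1) (x : Octo) :
    (Phi q r hq hr).symm x = ⟨star q * x.a * q, star r * x.b * q⟩ := rfl

lemma Phi_star_apply (q r : Q) (hq : Quaternion.normSq q = 1) (hr : Quaternion.normSq r = 1)
    (hq' : Quaternion.normSq (star q) = 1) (hr' : Quaternion.normSq (star r) = 1) (x : Octo) :
    Phi (star q) (star r) hq' hr' x = (Phi q r hq hr).symm x := by
  refine Octo.ext ?_ ?_ <;> simp [star_star]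

lemma exists_phi (v : Octo) (hre : v.a.re = 0) :
    ∃ (q r : Q) (hq : Quaternion.normSq q = 1) (hr : Quaternion.normSq r = 1),
      Phi q r hq hr v =
        ⟨Real.sqrt (Quaternion.normSq v.a) • qI,
          ((Real.sqrt (Quaternion.normSq v.b) : ℝ) : Q)⟩ := by
  obtain ⟨q, hq, hqa⟩ := exists_conj_diag v.a hre
  by_cases hb : v.b = 0
  · refine ⟨q, 1, hq, by simp [map_one], ?_⟩
    simp only [Phi_apply]
    refine Octo.ext hqa ?_
    show (1 : Q) * v.b * star q = _
    simp [hb]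
  · set β : ℝ := Real.sqrt (Quaternion.normSq v.b) with hβdef
    have hβ2 : β ^ 2 = Quaternion.normSq v.b := Real.sq_sqrt Quaternion.normSq_nonneg
    have hβpos : 0 < β := Real.sqrt_pos.mpr
      ((Quaternion.normSq_nonneg (a := v.b)).lt_of_ne'
        (fun h => hb (Quaternion.normSq_eq_zero.mp h)))
    refine ⟨q, β⁻¹ • (q * star v.b), hq, ?_, ?_⟩
    · rw [Quaternion.normSq_smul, map_mul, hq, one_mul, Quaternion.normSq_star, ← hβ2]
      field_simp
    · simp only [Phi_apply]
      refine Octo.ext hqa ?_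
      show (β⁻¹ • (q * star v.b)) * v.b * star q = ((β : ℝ) : Q)
      rw [smul_mul_assoc, smul_mul_assoc, mul_assoc q (star v.b) v.b,
        Quaternion.star_mul_self, Quaternion.mul_coe_eq_smul, smul_mul_assoc,
        unit_mul_star hq, smul_smul, ← Quaternion.coe_one, Quaternion.smul_coe]
      congr 1
      rw [← hβ2]
      field_simp

end OctoAux
/-- The pure octonions form an irreducible self-similar cone: any nonempty
subset `W ⊆ V` with `W ≠ {0}` that is closed under real scalar multiples and under all
algebra automorphisms of `𝕆` equals `V`. -/
theorem pure_octonions_irreducible_cone (W : Set Octo) (hWV : W ⊆ Octo.V)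
    (hne : W.Nonempty) (hW0 : W ≠ {0})
    (hscal : ∀ (c : ℝ), ∀ w ∈ W, c • w ∈ W)
    (haut : ∀ φ : Octo ≃ₗ[ℝ] Octo, Octo.IsAut φ → ∀ w ∈ W, φ w ∈ W) :
    W = Octo.V := by
  classical
  open OctoAux in
  obtain ⟨w, hwW, hw0⟩ : ∃ w ∈ W, w ≠ 0 := by
    by_contra hc
    push_neg at hc
    obtain ⟨w0, hw0⟩ := hne
    exact hW0 (Set.eq_singleton_iff_unique_mem.mpr ⟨(hc w0 hw0) ▸ hw0, hc⟩)
  have hwre : w.a.re = 0 := (OctoAux.mem_V_iff w).mp (hWV hwW)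
  have norms : ∀ v : Octo, v ≠ 0 →
      0 < Real.sqrt (Quaternion.normSq v.a) ^ 2 + Real.sqrt (Quaternion.normSq v.b) ^ 2 := by
    intro v hv0
    rw [Real.sq_sqrt Quaternion.normSq_nonneg, Real.sq_sqrt Quaternion.normSq_nonneg]
    rcases (Quaternion.normSq_nonneg (a := v.a)).lt_or_eq with h | h
    · exact lt_of_lt_of_le h (le_add_of_nonneg_right Quaternion.normSq_nonneg)
    · rcases (Quaternion.normSq_nonneg (a := v.b)).lt_or_eq with h2 | h2
      · exact lt_of_lt_of_le h2 (le_add_of_nonneg_left Quaternion.normSq_nonneg)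
      · exfalso
        exact hv0 (Octo.ext (Quaternion.normSq_eq_zero.mp h.symm)
          (Quaternion.normSq_eq_zero.mp h2.symm))
  -- Step 1 : `e1 ∈ W`.
  have he1 : OctoAux.e1 ∈ W := by
    obtain ⟨q, r, hq, hr, hPhi⟩ := OctoAux.exists_phi w hwre
    set α : ℝ := Real.sqrt (Quaternion.normSq w.a) with hαdef
    set β : ℝ := Real.sqrt (Quaternion.normSq w.b) with hβdef
    have hm2pos : 0 < α ^ 2 + β ^ 2 := norms w hw0
    set m : ℝ := Real.sqrt (α ^ 2 + β ^ 2) with hmdef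
    have hm2 : m ^ 2 = α ^ 2 + β ^ 2 := Real.sq_sqrt hm2pos.le
    have hmpos : 0 < m := Real.sqrt_pos.mpr hm2pos
    have hcs : (α / m) ^ 2 + (-(β / m)) ^ 2 = 1 := by
      field_simp
      linarith [hm2]
    have h1 : (⟨α • OctoAux.qI, ((β : ℝ) : OctoAux.Q)⟩ : Octo) ∈ W := by
      have := haut _ (OctoAux.Phi_isAut q r hq hr) w hwW
      rwa [hPhi] at this
    have h2 := haut _ (OctoAux.rho_isAut (α / m) (-(β / m)) hcs) _ h1
    rw [OctoAux.rho_special] at h2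
    have c1 : α / m * α - -(β / m) * β = m := by
      field_simp
      linarith [hm2]
    have c2 : -(β / m) * α + α / m * β = 0 := by
      field_simp
      ring
    rw [c1, c2] at h2
    have hme1 : (⟨m • OctoAux.qI, ((0 : ℝ) : OctoAux.Q)⟩ : Octo) = m • OctoAux.e1 := by
      refine Octo.ext ?_ ?_ <;> simp
    rw [hme1] at h2
    have h3 := hscal m⁻¹ _ h2
    rwa [smul_smul, inv_mul_cancel₀ hmpos.ne', one_smul] at h3
  -- Step 2 : every pure octonion lies in `W`.
  refine Set.Subset.antisymm hWV fun v hv => ?_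
  have hvre : v.a.re = 0 := (OctoAux.mem_V_iff v).mp hv
  rcases eq_or_ne v 0 with rfl | hv0
  · have := hscal 0 _ he1
    rwa [zero_smul] at this
  · obtain ⟨q, r, hq, hr, hPhi⟩ := OctoAux.exists_phi v hvre
    set α : ℝ := Real.sqrt (Quaternion.normSq v.a) with hαdef
    set β : ℝ := Real.sqrt (Quaternion.normSq v.b) with hβdef
    have hm2pos : 0 < α ^ 2 + β ^ 2 := norms v hv0
    set m : ℝ := Real.sqrt (α ^ 2 + β ^ 2) with hmdef
    have hm2 : m ^ 2 = α ^ 2 + β ^ 2 := Real.sq_sqrt hm2pos.le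
    have hmpos : 0 < m := Real.sqrt_pos.mpr hm2pos
    have hcs : (α / m) ^ 2 + (β / m) ^ 2 = 1 := by
      field_simp
      linarith [hm2]
    have h1 : (⟨m • OctoAux.qI, ((0 : ℝ) : OctoAux.Q)⟩ : Octo) ∈ W := by
      have hme1 : (⟨m • OctoAux.qI, ((0 : ℝ) : OctoAux.Q)⟩ : Octo) = m • OctoAux.e1 := by
        refine Octo.ext ?_ ?_ <;> simp
      rw [hme1]
      exact hscal m _ he1
    have h2 := haut _ (OctoAux.rho_isAut (α / m) (β / m) hcs) _ h1
    rw [OctoAux.rho_special] at h2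
    have c1 : α / m * m - β / m * 0 = α := by
      field_simp
      ring
    have c2 : β / m * m + α / m * 0 = β := by
      field_simp
      ring
    rw [c1, c2] at h2
    have hq' : Quaternion.normSq (star q) = 1 := by rw [Quaternion.normSq_star]; exact hq
    have hr' : Quaternion.normSq (star r) = 1 := by rw [Quaternion.normSq_star]; exact hr
    have h3 := haut _ (OctoAux.Phi_isAut (star q) (star r) hq' hr') _ h2
    rwa [OctoAux.Phi_star_apply q r hq hr, ← hPhi, LinearEquiv.symm_apply_apply] at h3
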